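/- Let G be a connected graph on n vertices and φ : E(G) → [n-1] a surjective edge coloring with no rainbow cycle (a JL-coloring), with color classes C₁, …, C_{n-1}. Then the number of rainbow spanning trees of (G, φ) equals the product ∏_{i=1}^{n-1} |C_i|. -/

import Mathlib

/-- `T` is the edge set of a spanning tree of `G`: its edges lie in `G`, and the graph
formed by these edges is connected (hence spanning) and acyclic. -/
def IsSpanningTreeEdges {V : Type*} (G : SimpleGraph V) (T : Finset (Sym2 V)) : Prop :=
  ↑T ⊆ G.edgeSet ∧ (SimpleGraph.fromEdgeSet (↑T : Set (Sym2 V))).Connected ∧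
    (SimpleGraph.fromEdgeSet (↑T : Set (Sym2 V))).IsAcyclic

/-- An edge set is rainbow under a coloring `φ` if all its edges receive distinct colors. -/
def IsRainbow {V : Type*} {k : ℕ} (φ : Sym2 V → Fin k) (T : Finset (Sym2 V)) : Prop :=
  Set.InjOn φ ↑T

/-- `G` has a rainbow cycle under `φ`: a cycle whose edges receive pairwise distinct colors. -/
def HasRainbowCycle {V : Type*} {k : ℕ} (G : SimpleGraph V) (φ : Sym2 V → Fin k) : Prop :=
  ∃ (v : V) (c : G.Walk v v), c.IsCycle ∧ Set.InjOn φ {e | e ∈ c.edges}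

/-- `φ` is a JL-coloring of `G`: every one of the `k` colors appears on some edge of `G`
(surjectivity onto the colors) and there is no rainbow cycle. -/
def IsJLColoring {V : Type*} {k : ℕ} (G : SimpleGraph V) (φ : Sym2 V → Fin k) : Prop :=
  (∀ c : Fin k, ∃ e ∈ G.edgeSet, φ e = c) ∧ ¬ HasRainbowCycle G φ

/-- The number of rainbow spanning trees of `G` under the edge coloring `φ`. -/
noncomputable def numRST {V : Type*} {k : ℕ} (G : SimpleGraph V) (φ : Sym2 V → Fin k) : ℕ :=
  Nat.card {T : Finset (Sym2 V) // IsSpanningTreeEdges G T ∧ IsRainbow φ T}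

open SimpleGraph Finset

section Aux

variable {V : Type*}

private lemma walk_cross {G H : SimpleGraph V} {u v : V} (p : G.Walk u v) :
    ¬ H.Reachable u v → ∃ a b, G.Adj a b ∧ ¬ H.Reachable a b := by
  induction p with
  | nil => exact fun hr => absurd ⟨.nil⟩ hr
  | @cons a x b h q ih =>
    intro hr
    by_cases hx : H.Reachable a x
    · exact ih (fun hxv => hr (hx.trans hxv))
    · exact ⟨a, x, h, hx⟩

private lemma exists_cross_edge {G H : SimpleGraph V} (hG : G.Connected)
    (hnc : ¬ H.Connected) : ∃ a b, G.Adj a b ∧ ¬ H.Reachable a b := by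
  have hne : Nonempty V := hG.nonempty
  have : ¬ H.Preconnected := fun h => hnc ⟨h⟩
  simp only [Preconnected, not_forall] at this
  obtain ⟨u, v, huv⟩ := this
  obtain ⟨p⟩ := hG.preconnected u v
  exact walk_cross p huv

private lemma sup_edge_isAcyclic {H : SimpleGraph V} (hac : H.IsAcyclic) {a b : V}
    (hr : ¬ H.Reachable a b) : (H ⊔ edge a b).IsAcyclic := by
  classical
  have hab : a ≠ b := fun h => hr (h ▸ Reachable.refl _)
  intro u c hc
  by_cases he : s(a, b) ∈ c.edges
  · have h2 := (adj_and_reachable_delete_edges_iff_exists_cycle.mpr ⟨u, c, hc, he⟩).2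
    apply hr
    refine h2.mono ?_
    intro x y hxy
    simp only [deleteEdges, sdiff_adj, sup_adj, edge_adj, fromEdgeSet_adj, Set.mem_singleton_iff] at hxy
    obtain ⟨h1 | h1, h2'⟩ := hxy
    · exact h1
    · exfalso
      apply h2'
      refine ⟨?_, h1.2⟩
      rcases h1.1 with ⟨rfl, rfl⟩ | ⟨rfl, rfl⟩
      · rfl
      · exact Sym2.eq_swap
  · have hsub : ∀ e ∈ c.edges, e ∈ H.edgeSet := by
      intro e hec
      have h3 := c.edges_subset_edgeSet hec
      rw [edgeSet_sup, edge_edgeSet_of_ne hab] at h3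
      rcases h3 with h1 | h1
      · exact h1
      · exact absurd (h1 ▸ hec) he
    exact hac (c.transfer H hsub) (hc.transfer hsub)

private lemma ncard_edgeSet_eq [Fintype V] (H : SimpleGraph V) [Fintype H.edgeSet] :
    H.edgeSet.ncard = H.edgeFinset.card := Set.ncard_eq_toFinset_card' _

private lemma acyclic_edge_bound [Fintype V] {G : SimpleGraph V} (hG : G.Connected) :
    ∀ (k : ℕ) (H : SimpleGraph V), H ≤ G → H.IsAcyclic →
      Fintype.card (Sym2 V) ≤ H.edgeSet.ncard + k → H.edgeSet.ncard ≤ Fintype.card V - 1 := by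
  have hV : 1 ≤ Fintype.card V := Fintype.card_pos_iff.mpr hG.nonempty
  intro k
  induction k with
  | zero =>
    intro H hle hac hcard
    by_cases hc : H.Connected
    · classical
      letI : DecidableRel H.Adj := Classical.decRel _
      have ht : H.IsTree := ⟨hc, hac⟩
      have h1 := ht.card_edgeFinset
      rw [ncard_edgeSet_eq]
      omega
    · exfalso
      obtain ⟨a, b, hab, hr⟩ := exists_cross_edge hG hc
      classical
      letI : DecidableRel (H ⊔ edge a b).Adj := Classical.decRel _
      letI : DecidableRel H.Adj := Classical.decRel _
      have hnadj : ¬ H.Adj a b := fun h => hr h.reachable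
      have h2 := SimpleGraph.card_edgeFinset_sup_edge (G := H) (s := a) (t := b) hnadj hab.ne
      have h3 : (H ⊔ edge a b).edgeSet.ncard ≤ Fintype.card (Sym2 V) := by
        rw [ncard_edgeSet_eq]
        exact (Finset.card_le_univ _).trans_eq (Finset.card_univ)
      rw [ncard_edgeSet_eq] at hcard h3
      omega
  | succ k ih =>
    intro H hle hac hcard
    by_cases hc : H.Connected
    · classical
      letI : DecidableRel H.Adj := Classical.decRel _
      have ht : H.IsTree := ⟨hc, hac⟩
      have h1 := ht.card_edgeFinset
      rw [ncard_edgeSet_eq]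
      omega
    · obtain ⟨a, b, hab, hr⟩ := exists_cross_edge hG hc
      classical
      letI : DecidableRel (H ⊔ edge a b).Adj := Classical.decRel _
      letI : DecidableRel H.Adj := Classical.decRel _
      have hnadj : ¬ H.Adj a b := fun h => hr h.reachable
      have h2 := SimpleGraph.card_edgeFinset_sup_edge (G := H) (s := a) (t := b) hnadj hab.ne
      have hle' : H ⊔ edge a b ≤ G := by
        refine sup_le hle ?_
        intro x y hxy
        rw [edge_adj] at hxy
        rcases hxy.1 with ⟨rfl, rfl⟩ | ⟨rfl, rfl⟩
        · exact hab
        · exact hab.symm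
      have h4 := ih (H ⊔ edge a b) hle' (sup_edge_isAcyclic hac hr) ?_
      · rw [ncard_edgeSet_eq] at h4 ⊢
        omega
      · rw [ncard_edgeSet_eq] at hcard
        rw [ncard_edgeSet_eq]
        omega

private lemma connected_of_acyclic_card [Fintype V] {G H : SimpleGraph V} (hG : G.Connected)
    (hle : H ≤ G) (hac : H.IsAcyclic) (hcard : H.edgeSet.ncard = Fintype.card V - 1) :
    H.Connected := by
  have hV : 1 ≤ Fintype.card V := Fintype.card_pos_iff.mpr hG.nonempty
  by_contra hc
  obtain ⟨a, b, hab, hr⟩ := exists_cross_edge hG hc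
  classical
  letI : DecidableRel (H ⊔ edge a b).Adj := Classical.decRel _
  letI : DecidableRel H.Adj := Classical.decRel _
  have hnadj : ¬ H.Adj a b := fun h => hr h.reachable
  have h2 := SimpleGraph.card_edgeFinset_sup_edge (G := H) (s := a) (t := b) hnadj hab.ne
  have hle' : H ⊔ edge a b ≤ G := by
    refine sup_le hle ?_
    intro x y hxy
    rw [edge_adj] at hxy
    rcases hxy.1 with ⟨rfl, rfl⟩ | ⟨rfl, rfl⟩
    · exact hab
    · exact hab.symm
  have h4 := acyclic_edge_bound hG (Fintype.card (Sym2 V)) (H ⊔ edge a b) hle'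
    (sup_edge_isAcyclic hac hr) (Nat.le_add_left _ _)
  rw [ncard_edgeSet_eq] at hcard h4
  omega

private lemma edgeSet_fromEdgeSet_of_subset {G : SimpleGraph V} {T : Finset (Sym2 V)}
    (h : ↑T ⊆ G.edgeSet) : (SimpleGraph.fromEdgeSet (↑T : Set (Sym2 V))).edgeSet = ↑T := by
  rw [edgeSet_fromEdgeSet]
  ext e
  simp only [Set.mem_diff, Set.mem_setOf_eq, and_iff_left_iff_imp]
  intro he
  exact G.not_isDiag_of_mem_edgeSet (h he)

end Aux

/-- For a JL-coloring `φ` of a connected graph `G` on `n` vertices (a surjective,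
rainbow-cycle-free coloring with `n - 1` colors), the number of rainbow spanning trees
equals the product of the sizes of the color classes. -/
theorem stmt_13 {V : Type*} [Fintype V] [DecidableEq V] (G : SimpleGraph V)
    [DecidableRel G.Adj] (hG : G.Connected)
    (φ : Sym2 V → Fin (Fintype.card V - 1)) (hφ : IsJLColoring G φ) :
    numRST G φ =
      ∏ c : Fin (Fintype.card V - 1), (G.edgeFinset.filter (fun e => φ e = c)).card := by
  classical
  obtain ⟨hsurj, hnrc⟩ := hφ
  have hV : 1 ≤ Fintype.card V := Fintype.card_pos_iff.mpr hG.nonempty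
  set E : Fin (Fintype.card V - 1) → Finset (Sym2 V) :=
    fun c => G.edgeFinset.filter (fun e => φ e = c) with hE
  have key : ∀ f : (∀ c, {e // e ∈ E c}),
      IsSpanningTreeEdges G (Finset.image (fun c => ((f c : Sym2 V))) Finset.univ) ∧
      IsRainbow φ (Finset.image (fun c => ((f c : Sym2 V))) Finset.univ) := by
    intro f
    have hfe : ∀ c, (f c : Sym2 V) ∈ G.edgeSet ∧ φ (f c) = c := by
      intro c
      have h := (f c).2
      simp only [hE, Finset.mem_filter, mem_edgeFinset] at h
      exact h
    set T := Finset.image (fun c => ((f c : Sym2 V))) Finset.univ with hT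
    have hsubT : ↑T ⊆ G.edgeSet := by
      intro e he
      simp only [hT, Finset.coe_image, Set.mem_image] at he
      obtain ⟨c, _, rfl⟩ := he
      exact (hfe c).1
    have hrb : IsRainbow φ T := by
      intro e1 h1 e2 h2 hphi
      simp only [hT, Finset.coe_image, Set.mem_image] at h1 h2
      obtain ⟨c1, _, rfl⟩ := h1
      obtain ⟨c2, _, rfl⟩ := h2
      have hc : c1 = c2 := by rw [← (hfe c1).2, ← (hfe c2).2, hphi]
      rw [hc]
    have hEeq : (SimpleGraph.fromEdgeSet (↑T : Set (Sym2 V))).edgeSet = ↑T :=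
      edgeSet_fromEdgeSet_of_subset hsubT
    have hac : (SimpleGraph.fromEdgeSet (↑T : Set (Sym2 V))).IsAcyclic := by
      intro v c hc
      have hsub2 : ∀ e ∈ c.edges, e ∈ (↑T : Set (Sym2 V)) := fun e he =>
        hEeq ▸ c.edges_subset_edgeSet he
      have hsub : ∀ e ∈ c.edges, e ∈ G.edgeSet := fun e he => hsubT (hsub2 e he)
      refine hnrc ⟨v, c.transfer G hsub, hc.transfer hsub, ?_⟩
      intro e1 h1 e2 h2 h12
      simp only [Set.mem_setOf_eq, Walk.edges_transfer] at h1 h2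
      exact hrb (hsub2 _ h1) (hsub2 _ h2) h12
    have hinj : Function.Injective (fun c => ((f c : Sym2 V))) := by
      intro c1 c2 h
      have h' := congrArg φ h
      rwa [(hfe c1).2, (hfe c2).2] at h'
    have hcardT : T.card = Fintype.card V - 1 := by
      rw [hT, Finset.card_image_of_injective _ hinj, Finset.card_univ, Fintype.card_fin]
    have hle : SimpleGraph.fromEdgeSet (↑T : Set (Sym2 V)) ≤ G := by
      have h := fromEdgeSet_mono hsubT
      rwa [fromEdgeSet_edgeSet] at h
    have hconn : (SimpleGraph.fromEdgeSet (↑T : Set (Sym2 V))).Connected := by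
      apply connected_of_acyclic_card hG hle hac
      rw [hEeq, Set.ncard_coe_finset, hcardT]
    exact ⟨⟨hsubT, hconn, hac⟩, hrb⟩
  let F : (∀ c, {e // e ∈ E c}) →
      {T : Finset (Sym2 V) // IsSpanningTreeEdges G T ∧ IsRainbow φ T} :=
    fun f => ⟨Finset.image (fun c => ((f c : Sym2 V))) Finset.univ, key f⟩
  have hbij : Function.Bijective F := by
    constructor
    · intro f g hfg
      have himg : Finset.image (fun c => ((f c : Sym2 V))) Finset.univ =
          Finset.image (fun c => ((g c : Sym2 V))) Finset.univ := congrArg Subtype.val hfg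
      funext c
      have hf : (f c : Sym2 V) ∈ Finset.image (fun c => ((g c : Sym2 V))) Finset.univ := by
        rw [← himg]; exact Finset.mem_image_of_mem _ (Finset.mem_univ c)
      obtain ⟨c', _, hc'⟩ := Finset.mem_image.mp hf
      have hfc : ∀ (h : ∀ c, {e // e ∈ E c}) c, φ (h c : Sym2 V) = c := by
        intro h c
        have h2 := (h c).2
        simp only [hE, Finset.mem_filter] at h2
        exact h2.2
      have hcc : c' = c := by
        have := congrArg φ hc'
        rwa [hfc g, hfc f] at this
      exact Subtype.ext (hcc ▸ hc').symm
    · rintro ⟨T, ⟨hsub, hconn, hac⟩, hrb⟩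
      have hEeq : (SimpleGraph.fromEdgeSet (↑T : Set (Sym2 V))).edgeSet = ↑T :=
        edgeSet_fromEdgeSet_of_subset hsub
      letI : Fintype (SimpleGraph.fromEdgeSet (↑T : Set (Sym2 V))).edgeSet :=
        Set.Finite.fintype (by rw [hEeq]; exact T.finite_toSet)
      have ht : (SimpleGraph.fromEdgeSet (↑T : Set (Sym2 V))).IsTree := ⟨hconn, hac⟩
      have h1 := ht.card_edgeFinset
      have h2 : (SimpleGraph.fromEdgeSet (↑T : Set (Sym2 V))).edgeSet.ncard = T.card := by
        rw [hEeq, Set.ncard_coe_finset]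
      rw [ncard_edgeSet_eq] at h2
      have hTc : T.card = Fintype.card V - 1 := by omega
      have himg : T.image φ = Finset.univ := by
        apply Finset.eq_univ_of_card
        rw [Finset.card_image_of_injOn hrb, hTc, Fintype.card_fin]
      have hex : ∀ c, ∃ e, e ∈ T ∧ φ e = c := by
        intro c
        have : c ∈ T.image φ := himg ▸ Finset.mem_univ c
        obtain ⟨e, he, hec⟩ := Finset.mem_image.mp this
        exact ⟨e, he, hec⟩
      refine ⟨fun c => ⟨(hex c).choose, ?_⟩, ?_⟩
      · simp only [hE, Finset.mem_filter, mem_edgeFinset]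
        exact ⟨hsub (hex c).choose_spec.1, (hex c).choose_spec.2⟩
      · apply Subtype.ext
        show Finset.image _ Finset.univ = T
        apply Finset.Subset.antisymm
        · intro e he
          obtain ⟨c, _, rfl⟩ := Finset.mem_image.mp he
          exact (hex c).choose_spec.1
        · intro e he
          rw [Finset.mem_image]
          refine ⟨φ e, Finset.mem_univ _, ?_⟩
          exact hrb ((hex (φ e)).choose_spec.1) he ((hex (φ e)).choose_spec.2)
  have hcardeq : numRST G φ = Nat.card (∀ c, {e // e ∈ E c}) :=
    (Nat.card_congr (Equiv.ofBijective F hbij)).symm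
  rw [hcardeq, Nat.card_pi]
  refine Finset.prod_congr rfl ?_
  intro c _
  rw [Nat.card_eq_fintype_card]
  exact Fintype.card_coe _
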